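/- Let n ≥ 2, let α, β : Fin n → ℝ be probability vectors, and let C : Fin n → Fin n → ℝ be a symmetric cost matrix with C k k = 0 for all k and C i j ≥ 0 for all i, j. For each k set c̲_k = min over j ≠ k of C k j, and set c̲ = min over pairs i ≠ j of C i j. Then for every coupling T of α and β: c̲ · (1/2) Σ_k |α k − β k| ≤ (1/2) Σ_k c̲_k · |α k − β k| ≤ Σ_{i,j} T i j * C i j. In particular, the transport cost of any (in particular any entropic-regularized optimal) coupling is bounded below by the weighted total variation between α and β with weights c̲_k. -/

import Mathlib

/-- A probability vector on `Fin n`. -/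
def IsProbVec {n : ℕ} (α : Fin n → ℝ) : Prop :=
  (∀ k, 0 ≤ α k) ∧ ∑ k, α k = 1

/-- A coupling of two probability vectors `α` and `β` on `Fin n`. -/
def IsCoupling {n : ℕ} (α β : Fin n → ℝ) (T : Fin n → Fin n → ℝ) : Prop :=
  (∀ i j, 0 ≤ T i j) ∧ (∀ i, ∑ j, T i j = α i) ∧ (∀ j, ∑ i, T i j = β j)

/-- Lemma 2 of the paper: for a symmetric nonnegative cost matrix with zero diagonal,
the transport cost of any coupling of `α` and `β` is bounded below by the weighted total
variation `(1/2) Σ_k c̲_k |α k − β k|` with weights `c̲_k = min_{j ≠ k} C k j`, which is in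
turn bounded below by `c̲ · TV(α, β)` where `c̲ = min_{i ≠ j} C i j`. -/
theorem transport_cost_ge_weighted_tv
    {n : ℕ} (hn : 2 ≤ n)
    (α β : Fin n → ℝ) (hα : IsProbVec α) (hβ : IsProbVec β)
    (C : Fin n → Fin n → ℝ)
    (hsym : ∀ i j, C i j = C j i)
    (hdiag : ∀ k, C k k = 0)
    (hpos : ∀ i j, 0 ≤ C i j)
    (T : Fin n → Fin n → ℝ) (hT : IsCoupling α β T) :
    (sInf {x | ∃ i j, i ≠ j ∧ C i j = x}) * ((1 / 2) * ∑ k, |α k - β k|) ≤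
        (1 / 2) * ∑ k, (sInf {x | ∃ j, j ≠ k ∧ C k j = x}) * |α k - β k| ∧
      (1 / 2) * ∑ k, (sInf {x | ∃ j, j ≠ k ∧ C k j = x}) * |α k - β k| ≤
        ∑ i, ∑ j, T i j * C i j := by
  obtain ⟨hα0, hα1⟩ := hα
  obtain ⟨hβ0, hβ1⟩ := hβ
  obtain ⟨hT0, hTα, hTβ⟩ := hT
  haveI : Nontrivial (Fin n) := Fin.nontrivial_iff_two_le.mpr hn
  set ck : Fin n → ℝ := fun k => sInf {x | ∃ j, j ≠ k ∧ C k j = x} with hckdef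
  have hbdd : ∀ k, BddBelow {x | ∃ j, j ≠ k ∧ C k j = x} := by
    intro k; exact ⟨0, by rintro x ⟨j, _, rfl⟩; exact hpos k j⟩
  have hne : ∀ k : Fin n, {x | ∃ j, j ≠ k ∧ C k j = x}.Nonempty := by
    intro k; obtain ⟨j, hj⟩ := exists_ne k; exact ⟨C k j, j, hj, rfl⟩
  have hck0 : ∀ k, 0 ≤ ck k := fun k =>
    le_csInf (hne k) (by rintro x ⟨j, _, rfl⟩; exact hpos k j)
  have hckle : ∀ k j, j ≠ k → ck k ≤ C k j := fun k j hj =>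
    csInf_le (hbdd k) ⟨j, hj, rfl⟩
  have hGbdd : BddBelow {x | ∃ i j, i ≠ j ∧ C i j = x} :=
    ⟨0, by rintro x ⟨i, j, _, rfl⟩; exact hpos i j⟩
  have hG : ∀ k, sInf {x | ∃ i j, i ≠ j ∧ C i j = x} ≤ ck k := by
    intro k
    apply csInf_le_csInf hGbdd (hne k)
    rintro x ⟨j, hj, rfl⟩
    exact ⟨k, j, hj.symm, rfl⟩
  have hTkα : ∀ k, T k k ≤ α k := by
    intro k; rw [← hTα k]
    exact Finset.single_le_sum (fun j _ => hT0 k j) (Finset.mem_univ k)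
  have hTkβ : ∀ k, T k k ≤ β k := by
    intro k; rw [← hTβ k]
    exact Finset.single_le_sum (fun i _ => hT0 i k) (Finset.mem_univ k)
  have habs : ∀ k, |α k - β k| ≤ (α k - T k k) + (β k - T k k) := by
    intro k
    rw [abs_sub_le_iff]
    constructor <;> nlinarith [hTkα k, hTkβ k]
  -- key lower bounds on the transport cost
  have hA1 : ∑ k, ck k * (α k - T k k) ≤ ∑ i, ∑ j, T i j * C i j := by
    apply Finset.sum_le_sum
    intro i _
    have hsumerase : ∑ j ∈ Finset.univ.erase i, T i j = α i - T i i := by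
      have := Finset.sum_erase_add Finset.univ (fun j => T i j) (Finset.mem_univ i)
      rw [hTα i] at this
      linarith
    calc ck i * (α i - T i i) = ∑ j ∈ Finset.univ.erase i, T i j * ck i := by
          rw [← Finset.sum_mul, hsumerase, mul_comm]
      _ ≤ ∑ j ∈ Finset.univ.erase i, T i j * C i j := by
          apply Finset.sum_le_sum
          intro j hj
          exact mul_le_mul_of_nonneg_left (hckle i j (Finset.ne_of_mem_erase hj)) (hT0 i j)
      _ ≤ ∑ j, T i j * C i j := by
          apply Finset.sum_le_sum_of_subset_of_nonneg (Finset.erase_subset _ _)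
          intro j _ _
          exact mul_nonneg (hT0 i j) (hpos i j)
  have hA2 : ∑ k, ck k * (β k - T k k) ≤ ∑ i, ∑ j, T i j * C i j := by
    rw [Finset.sum_comm]
    apply Finset.sum_le_sum
    intro j _
    have hsumerase : ∑ i ∈ Finset.univ.erase j, T i j = β j - T j j := by
      have := Finset.sum_erase_add Finset.univ (fun i => T i j) (Finset.mem_univ j)
      rw [hTβ j] at this
      linarith
    calc ck j * (β j - T j j) = ∑ i ∈ Finset.univ.erase j, T i j * ck j := by
          rw [← Finset.sum_mul, hsumerase, mul_comm]
      _ ≤ ∑ i ∈ Finset.univ.erase j, T i j * C i j := by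
          apply Finset.sum_le_sum
          intro i hi
          have : ck j ≤ C i j := by
            rw [hsym i j]
            exact hckle j i (Finset.ne_of_mem_erase hi)
          exact mul_le_mul_of_nonneg_left this (hT0 i j)
      _ ≤ ∑ i, T i j * C i j := by
          apply Finset.sum_le_sum_of_subset_of_nonneg (Finset.erase_subset _ _)
          intro i _ _
          exact mul_nonneg (hT0 i j) (hpos i j)
  constructor
  · have heq : sInf {x | ∃ i j, i ≠ j ∧ C i j = x} * ((1 / 2) * ∑ k, |α k - β k|)
        = (1 / 2) * ∑ k, sInf {x | ∃ i j, i ≠ j ∧ C i j = x} * |α k - β k| := by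
      rw [← Finset.mul_sum]; ring
    rw [heq]
    refine mul_le_mul_of_nonneg_left ?_ (by norm_num)
    exact Finset.sum_le_sum (fun k _ => mul_le_mul_of_nonneg_right (hG k) (abs_nonneg _))
  · have key : ∑ k, ck k * |α k - β k| ≤ 2 * ∑ i, ∑ j, T i j * C i j := by
      calc ∑ k, ck k * |α k - β k|
          ≤ ∑ k, ck k * ((α k - T k k) + (β k - T k k)) :=
            Finset.sum_le_sum (fun k _ => mul_le_mul_of_nonneg_left (habs k) (hck0 k))
        _ = ∑ k, ck k * (α k - T k k) + ∑ k, ck k * (β k - T k k) := by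
            rw [← Finset.sum_add_distrib]
            exact Finset.sum_congr rfl (fun k _ => by ring)
        _ ≤ (∑ i, ∑ j, T i j * C i j) + (∑ i, ∑ j, T i j * C i j) := add_le_add hA1 hA2
        _ = 2 * ∑ i, ∑ j, T i j * C i j := by ring
    linarith
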